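/- The matrix-valued inner product ⟨P, Q⟩_Θ = ∫ P(Θ(x)) W(x) Q(Θ(x))ᵀ dμ(x) is non-degenerate: for every m×m matrix-valued polynomial P with real coefficients, ∫ P(Θ(x)) W(x) P(Θ(x))ᵀ dμ(x) = 0 implies P = 0. Moreover ∫ P(Θ(x)) W(x) P(Θ(x))ᵀ dμ(x) is always positive semidefinite. -/

import Mathlib

open MeasureTheory Matrix

/-- The Gram matrix `⟨Q, R⟩_Θ = ∫ Q(Θ(x)) W(x) R(Θ(x))ᵀ dμ(x)` of two `m × m`
matrix-valued polynomials, where `W(x) = 𝐩_0(x) 𝐩_0(x)ᵀ` is built from the scalar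
polynomials `p_0, …, p_{m-1}`; stated entrywise. -/
noncomputable def thetaGram (m : ℕ) (Θ : Polynomial ℝ) (p : ℕ → Polynomial ℝ)
    (μ : Measure ℝ) (Q R : Matrix (Fin m) (Fin m) (Polynomial ℝ)) :
    Matrix (Fin m) (Fin m) ℝ :=
  fun s t =>
    ∫ x : ℝ,
      (∑ u : Fin m, ∑ v : Fin m,
        ((Q s u).comp Θ).eval x * ((p (u : ℕ)).eval x * (p (v : ℕ)).eval x)
          * ((R t v).comp Θ).eval x) ∂μ

/-- Degrees and top coefficients of the orthogonal polynomials. -/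
lemma thetaAux_deg (a b : ℕ → ℝ) (c : ℕ → ℝ) (ha : ∀ n, 0 < a n)
    (p : ℕ → Polynomial ℝ) (hp0 : p 0 = 1)
    (hprec0 : Polynomial.X * p 0 = Polynomial.C (a 0) * p 1 + Polynomial.C (b 0) * p 0)
    (hprec : ∀ n, 1 ≤ n →
      Polynomial.X * p n
        = Polynomial.C (a n) * p (n + 1) + Polynomial.C (b n) * p n
          + Polynomial.C (c n) * p (n - 1)) :
    ∀ n, (p n).natDegree ≤ n ∧ (p n).coeff n ≠ 0 := by
  have key : ∀ n, (p n).natDegree ≤ n ∧ (p n).coeff n ≠ 0 ∧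
      (p (n+1)).natDegree ≤ n+1 ∧ (p (n+1)).coeff (n+1) ≠ 0 := by
    intro n
    induction n with
    | zero =>
      have h1 : p 1 = Polynomial.C (a 0)⁻¹ * (Polynomial.X - Polynomial.C (b 0)) := by
        have : Polynomial.C (a 0) * p 1 = Polynomial.X - Polynomial.C (b 0) := by
          rw [hp0] at hprec0; linear_combination -hprec0
        rw [← this, ← mul_assoc, ← Polynomial.C_mul, inv_mul_cancel₀ (ha 0).ne', Polynomial.C_1, one_mul]
      refine ⟨by simp [hp0], by simp [hp0], ?_, ?_⟩
      · rw [h1]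
        refine le_trans Polynomial.natDegree_mul_le ?_
        rw [Polynomial.natDegree_C, zero_add]
        exact le_trans (Polynomial.natDegree_sub_le _ _) (by simp)
      · rw [h1]
        simp [Polynomial.coeff_C_mul, Polynomial.coeff_sub]
        exact (ha 0).ne'
    | succ n ih =>
      obtain ⟨h0, h0c, h1, h1c⟩ := ih
      have hrec := hprec (n+1) (by omega)
      simp only [Nat.add_sub_cancel] at hrec
      have h2 : p (n+2) = Polynomial.C (a (n+1))⁻¹ *
          (Polynomial.X * p (n+1) - Polynomial.C (b (n+1)) * p (n+1) - Polynomial.C (c (n+1)) * p n) := by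
        have : Polynomial.C (a (n+1)) * p (n+2) =
            Polynomial.X * p (n+1) - Polynomial.C (b (n+1)) * p (n+1) - Polynomial.C (c (n+1)) * p n := by
          linear_combination -hrec
        rw [← this, ← mul_assoc, ← Polynomial.C_mul, inv_mul_cancel₀ (ha (n+1)).ne', Polynomial.C_1, one_mul]
      refine ⟨h1, h1c, ?_, ?_⟩
      · rw [h2]
        refine le_trans Polynomial.natDegree_mul_le ?_
        rw [Polynomial.natDegree_C, zero_add]
        refine le_trans (Polynomial.natDegree_sub_le _ _) (max_le (le_trans (Polynomial.natDegree_sub_le _ _) (max_le ?_ ?_)) ?_)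
        · exact le_trans Polynomial.natDegree_mul_le (by simp; omega)
        · exact le_trans Polynomial.natDegree_mul_le (by simp; omega)
        · exact le_trans Polynomial.natDegree_mul_le (by simp; omega)
      · rw [h2]
        rw [Polynomial.coeff_C_mul, Polynomial.coeff_sub, Polynomial.coeff_sub]
        have e1 : (Polynomial.X * p (n+1)).coeff (n+2) = (p (n+1)).coeff (n+1) :=
          Polynomial.coeff_X_mul _ _
        have e2 : (Polynomial.C (b (n+1)) * p (n+1)).coeff (n+2) = 0 := by
          rw [Polynomial.coeff_C_mul, Polynomial.coeff_eq_zero_of_natDegree_lt (by omega), mul_zero]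
        have e3 : (Polynomial.C (c (n+1)) * p n).coeff (n+2) = 0 := by
          rw [Polynomial.coeff_C_mul, Polynomial.coeff_eq_zero_of_natDegree_lt (by omega), mul_zero]
        rw [e1, e2, e3, sub_zero, sub_zero]
        exact mul_ne_zero (inv_ne_zero (ha (n+1)).ne') h1c
  intro n
  exact ⟨(key n).1, (key n).2.1⟩

/-- Orthogonality against higher-degree `p n`. -/
lemma thetaAux_ortho_lt (p : ℕ → Polynomial ℝ) (μ : Measure ℝ)
    (hint2 : ∀ q r : Polynomial ℝ, Integrable (fun x => q.eval x * r.eval x) μ)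
    (hpne : ∀ n, (p n).coeff n ≠ 0)
    (hdeg : ∀ n, (p n).natDegree = n)
    (h : ℕ → ℝ)
    (horth : ∀ n k : ℕ,
      ∫ x : ℝ, (p n).eval x * (p k).eval x ∂μ = if n = k then h n else 0) :
    ∀ (g : Polynomial ℝ) (n : ℕ), g.natDegree < n →
      ∫ x : ℝ, g.eval x * (p n).eval x ∂μ = 0 := by
  suffices H : ∀ d : ℕ, ∀ g : Polynomial ℝ, g.natDegree < d → ∀ n, g.natDegree < n →
      ∫ x : ℝ, g.eval x * (p n).eval x ∂μ = 0 by
    intro g n hn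
    exact H (g.natDegree + 1) g (Nat.lt_succ_self _) n hn
  intro d
  induction d with
  | zero => intro g hg; omega
  | succ d ih =>
    intro g hg n hn
    by_cases hg0 : g = 0
    · simp [hg0]
    set e := g.natDegree with he
    set cc := g.coeff e / (p e).coeff e with hcc
    set g' := g - Polynomial.C cc * p e with hg'
    have hdegCpe : (Polynomial.C cc * p e).natDegree ≤ e :=
      le_trans Polynomial.natDegree_mul_le (by simp [hdeg])
    have hde : g'.natDegree ≤ e :=
      le_trans (Polynomial.natDegree_sub_le _ _) (max_le le_rfl hdegCpe)
    have hcoe : g'.coeff e = 0 := by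
      rw [hg', Polynomial.coeff_sub, Polynomial.coeff_C_mul, hcc,
        div_mul_cancel₀ _ (hpne e), sub_self]
    have I1 : ∫ x : ℝ, g'.eval x * (p n).eval x ∂μ = 0 := by
      by_cases hg'0 : g' = 0
      · simp [hg'0]
      · have hlt : g'.natDegree < e := by
          have hne : g'.natDegree ≠ e := fun h' => hg'0 (Polynomial.leadingCoeff_eq_zero.mp
            (by rw [← Polynomial.coeff_natDegree, h']; exact hcoe))
          omega
        exact ih g' (by omega) n (by omega)
    have hsplit : g = g' + Polynomial.C cc * p e := by rw [hg']; ring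
    calc ∫ x : ℝ, g.eval x * (p n).eval x ∂μ
        = ∫ x : ℝ, (g'.eval x * (p n).eval x + cc * ((p e).eval x * (p n).eval x)) ∂μ := by
          apply integral_congr_ae
          filter_upwards with x
          rw [hsplit]; simp [Polynomial.eval_add, Polynomial.eval_mul]; ring
      _ = (∫ x : ℝ, g'.eval x * (p n).eval x ∂μ)
            + ∫ x : ℝ, cc * ((p e).eval x * (p n).eval x) ∂μ := by
          exact integral_add (hint2 g' (p n)) ((hint2 (p e) (p n)).const_mul cc)
      _ = 0 := by
          rw [I1, integral_const_mul, horth e n, if_neg (by omega), mul_zero, add_zero]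

/-- Scalar non-degeneracy: a polynomial orthogonal to all `p k` vanishes. -/
lemma thetaAux_nondeg (p : ℕ → Polynomial ℝ) (μ : Measure ℝ)
    (hint2 : ∀ q r : Polynomial ℝ, Integrable (fun x => q.eval x * r.eval x) μ)
    (hpne : ∀ n, (p n).coeff n ≠ 0)
    (hdeg : ∀ n, (p n).natDegree = n)
    (h : ℕ → ℝ) (hh : ∀ n, 0 < h n)
    (horth : ∀ n k : ℕ,
      ∫ x : ℝ, (p n).eval x * (p k).eval x ∂μ = if n = k then h n else 0)
    (g : Polynomial ℝ)
    (hg : ∀ k, ∫ x : ℝ, g.eval x * (p k).eval x ∂μ = 0) : g = 0 := by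
  by_contra hg0
  set e := g.natDegree with he
  set cc := g.coeff e / (p e).coeff e with hcc
  have hccne : cc ≠ 0 := by
    apply div_ne_zero _ (hpne e)
    rw [he, Polynomial.coeff_natDegree]
    exact fun hc => hg0 (Polynomial.leadingCoeff_eq_zero.mp hc)
  set g' := g - Polynomial.C cc * p e with hg'
  have hdegCpe : (Polynomial.C cc * p e).natDegree ≤ e :=
    le_trans Polynomial.natDegree_mul_le (by simp [hdeg])
  have hde : g'.natDegree ≤ e :=
    le_trans (Polynomial.natDegree_sub_le _ _) (max_le le_rfl hdegCpe)
  have hcoe : g'.coeff e = 0 := by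
    rw [hg', Polynomial.coeff_sub, Polynomial.coeff_C_mul, hcc,
      div_mul_cancel₀ _ (hpne e), sub_self]
  have I1 : ∫ x : ℝ, g'.eval x * (p e).eval x ∂μ = 0 := by
    by_cases hg'0 : g' = 0
    · simp [hg'0]
    · have hlt : g'.natDegree < e := by
        have hne : g'.natDegree ≠ e := fun h' => hg'0 (Polynomial.leadingCoeff_eq_zero.mp
          (by rw [← Polynomial.coeff_natDegree, h']; exact hcoe))
        omega
      exact thetaAux_ortho_lt p μ hint2 hpne hdeg h horth g' e hlt
  have hsplit : g = g' + Polynomial.C cc * p e := by rw [hg']; ring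
  have : (0 : ℝ) = cc * h e := by
    calc (0 : ℝ) = ∫ x : ℝ, g.eval x * (p e).eval x ∂μ := (hg e).symm
      _ = ∫ x : ℝ, (g'.eval x * (p e).eval x + cc * ((p e).eval x * (p e).eval x)) ∂μ := by
          apply integral_congr_ae
          filter_upwards with x
          rw [hsplit]; simp [Polynomial.eval_add, Polynomial.eval_mul]; ring
      _ = (∫ x : ℝ, g'.eval x * (p e).eval x ∂μ)
            + ∫ x : ℝ, cc * ((p e).eval x * (p e).eval x) ∂μ :=
          integral_add (hint2 g' (p e)) ((hint2 (p e) (p e)).const_mul cc)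
      _ = cc * h e := by
          rw [I1, integral_const_mul, horth e e, if_pos rfl, zero_add]
  exact absurd this.symm (mul_ne_zero hccne (hh e).ne')

/-- Linear independence of `(q_u ∘ Θ) · p_u`. -/
lemma thetaAux_indep (m : ℕ) (hm : 1 ≤ m) (Θ : Polynomial ℝ) (hΘ : Θ.natDegree = m)
    (p : ℕ → Polynomial ℝ)
    (hpne : ∀ n, (p n).coeff n ≠ 0)
    (hdeg : ∀ n, (p n).natDegree = n)
    (q : Fin m → Polynomial ℝ)
    (hq : ∑ u : Fin m, (q u).comp Θ * p (u : ℕ) = 0) :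
    ∀ u, q u = 0 := by
  by_contra hcon
  push_neg at hcon
  obtain ⟨w, hw⟩ := hcon
  set S : Finset (Fin m) := Finset.univ.filter (fun u => q u ≠ 0) with hS
  have hSne : S.Nonempty := ⟨w, by simp [hS, hw]⟩
  have hΘ0 : Θ.natDegree ≠ 0 := by omega
  have hΘne : Θ ≠ 0 := fun hc => by simp [hc] at hΘ; omega
  have hpn0 : ∀ n, p n ≠ 0 := fun n hc => hpne n (by simp [hc])
  set key : Fin m → ℕ := fun u => (q u).natDegree * m + (u : ℕ) with hkey
  obtain ⟨u₀, hu₀S, hu₀max⟩ := Finset.exists_max_image S key hSne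
  have hqu₀ : q u₀ ≠ 0 := by simpa [hS] using hu₀S
  set g : Fin m → Polynomial ℝ := fun u => (q u).comp Θ * p (u : ℕ) with hg
  have hcompne : ∀ u, q u ≠ 0 → (q u).comp Θ ≠ 0 := by
    intro u hu hc
    have hl := Polynomial.leadingCoeff_comp (p := q u) (q := Θ) hΘ0
    rw [hc, Polynomial.leadingCoeff_zero] at hl
    exact mul_ne_zero (Polynomial.leadingCoeff_ne_zero.mpr hu)
      (pow_ne_zero _ (Polynomial.leadingCoeff_ne_zero.mpr hΘne)) hl.symm
  have hdegg : ∀ u, q u ≠ 0 → (g u).natDegree = key u := by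
    intro u hu
    rw [hg]
    rw [Polynomial.natDegree_mul (hcompne u hu) (hpn0 _), Polynomial.natDegree_comp, hΘ, hdeg]
  have hzero : (∑ u : Fin m, g u).coeff (key u₀) = 0 := by rw [hq]; simp
  rw [Polynomial.finset_sum_coeff] at hzero
  rw [Finset.sum_eq_single u₀] at hzero
  · apply absurd hzero
    rw [← hdegg u₀ hqu₀, Polynomial.coeff_natDegree]
    exact Polynomial.leadingCoeff_ne_zero.mpr (mul_ne_zero (hcompne u₀ hqu₀) (hpn0 _))
  · intro u _ hne
    by_cases hu : q u = 0
    · simp [hg, hu]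
    · apply Polynomial.coeff_eq_zero_of_natDegree_lt
      rw [hdegg u hu]
      have hle : key u ≤ key u₀ := hu₀max u (by simp [hS, hu])
      have hne' : key u ≠ key u₀ := by
        intro hc
        apply hne
        have e1 : key u % m = (u : ℕ) := by
          rw [hkey]
          simp only []
          rw [mul_comm, Nat.mul_add_mod, Nat.mod_eq_of_lt u.isLt]
        have e2 : key u₀ % m = (u₀ : ℕ) := by
          rw [hkey]
          simp only []
          rw [mul_comm, Nat.mul_add_mod, Nat.mod_eq_of_lt u₀.isLt]
        have h1 : (u : ℕ) = (u₀ : ℕ) := by rw [← e1, ← e2, hc]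
        exact Fin.ext h1
      omega
  · intro hc
    exact absurd (Finset.mem_univ u₀) hc

theorem thetaGram_posSemidef_and_nondegenerate
    (a b : ℕ → ℝ) (c : ℕ → ℝ) (ha : ∀ n, 0 < a n)
    (p : ℕ → Polynomial ℝ) (hp0 : p 0 = 1)
    (hprec0 : Polynomial.X * p 0 = Polynomial.C (a 0) * p 1 + Polynomial.C (b 0) * p 0)
    (hprec : ∀ n, 1 ≤ n →
      Polynomial.X * p n
        = Polynomial.C (a n) * p (n + 1) + Polynomial.C (b n) * p n
          + Polynomial.C (c n) * p (n - 1))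
    (m : ℕ) (hm : 1 ≤ m) (Θ : Polynomial ℝ) (hΘ : Θ.natDegree = m)
    (μ : Measure ℝ)
    (hmom : ∀ n : ℕ, Integrable (fun x : ℝ => x ^ n) μ)
    (h : ℕ → ℝ) (hh : ∀ n, 0 < h n)
    (horth : ∀ n k : ℕ,
      ∫ x : ℝ, (p n).eval x * (p k).eval x ∂μ = if n = k then h n else 0)
    (Q : Matrix (Fin m) (Fin m) (Polynomial ℝ)) :
    (thetaGram m Θ p μ Q Q).PosSemidef
      ∧ (thetaGram m Θ p μ Q Q = 0 → Q = 0) := by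
  -- integrability of polynomials
  have hint : ∀ q : Polynomial ℝ, Integrable (fun x => q.eval x) μ := by
    intro q
    have hrw : (fun x : ℝ => q.eval x)
        = fun x => ∑ i ∈ Finset.range (q.natDegree + 1), q.coeff i * x ^ i := by
      funext x; exact q.eval_eq_sum_range x
    rw [hrw]
    exact integrable_finset_sum _ fun i _ => (hmom i).const_mul _
  have hint2 : ∀ q r : Polynomial ℝ, Integrable (fun x => q.eval x * r.eval x) μ := by
    intro q r
    have := hint (q * r)
    simpa [Polynomial.eval_mul] using this
  -- degrees
  have hdegle := thetaAux_deg a b c ha p hp0 hprec0 hprec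
  have hpne : ∀ n, (p n).coeff n ≠ 0 := fun n => (hdegle n).2
  have hdeg : ∀ n, (p n).natDegree = n := fun n =>
    le_antisymm (hdegle n).1 (Polynomial.le_natDegree_of_ne_zero (hdegle n).2)
  -- the row polynomials
  set f : Fin m → Polynomial ℝ := fun s => ∑ u : Fin m, (Q s u).comp Θ * p (u : ℕ) with hf
  have entry : ∀ s t, thetaGram m Θ p μ Q Q s t
      = ∫ x : ℝ, (f s).eval x * (f t).eval x ∂μ := by
    intro s t
    apply integral_congr_ae
    filter_upwards with x
    rw [hf]
    simp only [Polynomial.eval_finset_sum, Polynomial.eval_mul]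
    rw [Finset.sum_mul_sum]
    apply Finset.sum_congr rfl
    intro u _
    apply Finset.sum_congr rfl
    intro v _
    ring
  have hintf : ∀ s t : Fin m, Integrable (fun x => (f s).eval x * (f t).eval x) μ :=
    fun s t => hint2 (f s) (f t)
  constructor
  · -- positive semidefinite
    apply Matrix.PosSemidef.of_dotProduct_mulVec_nonneg
    · -- Hermitian
      ext s t
      simp only [Matrix.conjTranspose_apply, star_trivial]
      rw [entry, entry]
      apply integral_congr_ae
      filter_upwards with x
      ring
    · intro y
      have hstar : star y = y := by funext i; simp
      rw [hstar]
      have hrw : y ⬝ᵥ (thetaGram m Θ p μ Q Q).mulVec y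
          = ∫ x : ℝ, (∑ s : Fin m, y s * (f s).eval x) ^ 2 ∂μ := by
        rw [show y ⬝ᵥ (thetaGram m Θ p μ Q Q).mulVec y
            = ∑ s : Fin m, y s * ∑ t : Fin m, thetaGram m Θ p μ Q Q s t * y t by
          simp [dotProduct, Matrix.mulVec]]
        calc ∑ s : Fin m, y s * ∑ t : Fin m, thetaGram m Θ p μ Q Q s t * y t
            = ∑ s : Fin m, ∑ t : Fin m,
                ∫ x : ℝ, y s * ((f s).eval x * (f t).eval x) * y t ∂μ := by
              apply Finset.sum_congr rfl
              intro s _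
              rw [Finset.mul_sum]
              apply Finset.sum_congr rfl
              intro t _
              rw [entry, ← integral_mul_const, ← integral_const_mul]
              apply integral_congr_ae
              filter_upwards with x
              ring
          _ = ∫ x : ℝ, ∑ s : Fin m, ∑ t : Fin m,
                y s * ((f s).eval x * (f t).eval x) * y t ∂μ := by
              rw [integral_finset_sum _ (fun s _ => integrable_finset_sum _
                (fun t _ => ((hintf s t).const_mul (y s)).mul_const (y t)))]
              apply Finset.sum_congr rfl
              intro s _
              rw [integral_finset_sum _ (fun t _ => ((hintf s t).const_mul (y s)).mul_const (y t))]
          _ = ∫ x : ℝ, (∑ s : Fin m, y s * (f s).eval x) ^ 2 ∂μ := by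
              apply integral_congr_ae
              filter_upwards with x
              rw [sq, Finset.sum_mul_sum]
              apply Finset.sum_congr rfl
              intro u _
              apply Finset.sum_congr rfl
              intro v _
              ring
      rw [hrw]
      apply integral_nonneg
      intro x
      positivity
  · -- non-degeneracy
    intro hG
    have hfs : ∀ s, f s = 0 := by
      intro s
      have hGss : (0 : ℝ) = ∫ x : ℝ, (f s).eval x * (f s).eval x ∂μ := by
        rw [← entry s s, hG]; rfl
      have hae : (fun x : ℝ => (f s).eval x * (f s).eval x) =ᵐ[μ] 0 := by
        rw [← integral_eq_zero_iff_of_nonneg (fun x => mul_self_nonneg _) (hintf s s)]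
        exact hGss.symm
      have haezero : (fun x : ℝ => (f s).eval x) =ᵐ[μ] 0 := by
        filter_upwards [hae] with x hx
        exact mul_self_eq_zero.mp hx
      apply thetaAux_nondeg p μ hint2 hpne hdeg h hh horth
      intro k
      apply integral_eq_zero_of_ae
      filter_upwards [haezero] with x hx
      simp only [Pi.zero_apply] at hx
      simp [hx]
    apply Matrix.ext
    intro s u
    have := thetaAux_indep m hm Θ hΘ p hpne hdeg (fun u => Q s u) (hfs s)
    simpa using this u
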